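/- Let K be a field, R = K[X_1, X_2, Y_1, Y_2, Y_3], and I = (X_1^3, X_2^3, X_1^2 Y_1 + X_1 X_2 Y_2 + X_2^2 Y_3). Then the depth of R/I with respect to the maximal graded ideal m = (X_1, X_2, Y_1, Y_2, Y_3) is zero; equivalently, every element of m is a zerodivisor on R/I. -/

import Mathlib

open MvPolynomial in
private lemma three_cubics_coeff_aux (K : Type*) [Field K] (p : MvPolynomial (Fin 5) K)
    (hp : p ∈ Ideal.span ({X 0 ^ 3, X 1 ^ 3, X 0 ^ 2 * X 2 + X 0 * X 1 * X 3 + X 1 ^ 2 * X 4} :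
      Set (MvPolynomial (Fin 5) K)))
    (m : Fin 5 →₀ ℕ) (h : coeff m p ≠ 0) :
    3 ≤ m 0 ∨ 3 ≤ m 1 ∨ m 2 ≠ 0 ∨ m 3 ≠ 0 ∨ m 4 ≠ 0 := by
  induction hp using Submodule.span_induction generalizing m with
  | mem x hx =>
      rcases hx with rfl | rfl | rfl
      · rw [coeff_X_pow, ne_eq, ite_eq_right_iff, not_forall] at h
        obtain ⟨hm, -⟩ := h
        exact Or.inl (by rw [← hm]; simp)
      · rw [coeff_X_pow, ne_eq, ite_eq_right_iff, not_forall] at h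
        obtain ⟨hm, -⟩ := h
        exact Or.inr (Or.inl (by rw [← hm]; simp))
      · have e : (X 0 ^ 2 * X 2 + X 0 * X 1 * X 3 + X 1 ^ 2 * X 4 : MvPolynomial (Fin 5) K)
            = monomial (Finsupp.single 0 2 + Finsupp.single 2 1) 1
            + monomial (Finsupp.single 0 1 + Finsupp.single 1 1 + Finsupp.single 3 1) 1
            + monomial (Finsupp.single 1 2 + Finsupp.single 4 1) 1 := by
          simp [X_pow_eq_monomial, X, monomial_mul, monomial_pow, Finsupp.smul_single]
        rw [e] at h
        simp only [coeff_add, coeff_monomial] at h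
        have : (Finsupp.single (0:Fin 5) 2 + Finsupp.single 2 1 = m)
            ∨ (Finsupp.single (0:Fin 5) 1 + Finsupp.single 1 1 + Finsupp.single 3 1 = m)
            ∨ (Finsupp.single (1:Fin 5) 2 + Finsupp.single 4 1 = m) := by
          by_contra hc
          push_neg at hc
          simp [hc.1, hc.2.1, hc.2.2] at h
        rcases this with rfl | rfl | rfl <;>
          simp [Finsupp.single_apply]
  | zero => simp at h
  | add x y _ _ ihx ihy =>
      rw [coeff_add] at h
      rcases (by by_contra hc; push_neg at hc; simp [hc.1, hc.2] at h :
        coeff m x ≠ 0 ∨ coeff m y ≠ 0) with h' | h'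
      · exact ihx m h'
      · exact ihy m h'
  | smul a x _ ihx =>
      rw [smul_eq_mul, coeff_mul] at h
      obtain ⟨⟨u, v⟩, huv, hne⟩ := Finset.exists_ne_zero_of_sum_ne_zero h
      have hv : coeff v x ≠ 0 := fun h0 => hne (by simp [h0])
      have hm : u + v = m := (Finset.HasAntidiagonal.mem_antidiagonal.mp huv)
      have := ihx v hv
      subst hm
      rcases this with h|h|h|h|h
      · exact Or.inl (le_trans h (by simp))
      · exact Or.inr (Or.inl (le_trans h (by simp)))
      · exact Or.inr (Or.inr (Or.inl (by simp; omega)))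
      · exact Or.inr (Or.inr (Or.inr (Or.inl (by simp; omega))))
      · exact Or.inr (Or.inr (Or.inr (Or.inr (by simp; omega))))

open MvPolynomial in
/-- In `R = K[X₁,X₂,Y₁,Y₂,Y₃]` with
`I = (X₁³, X₂³, X₁²Y₁ + X₁X₂Y₂ + X₂²Y₃)`, the depth of `R/I` with respect to
the maximal graded ideal `m = (X₁,X₂,Y₁,Y₂,Y₃)` is zero: `R/I ≠ 0` and every
element of `m` is a zerodivisor on `R/I` (no element of `m` is a
nonzerodivisor on `R/I`). -/
theorem three_cubics_depth_zero (K : Type*) [Field K] :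
    let R := MvPolynomial (Fin 5) K
    let I : Ideal R := Ideal.span
      {X 0 ^ 3, X 1 ^ 3, X 0 ^ 2 * X 2 + X 0 * X 1 * X 3 + X 1 ^ 2 * X 4}
    Nontrivial (R ⧸ I) ∧
      ∀ r ∈ (Ideal.span (Set.range X) : Ideal R),
        ∃ t : R ⧸ I, t ≠ 0 ∧ r • t = 0 := by
  intro R I
  set w : R := X 0 ^ 2 * X 1 ^ 2 with hw
  -- the witness monomial is not in I
  have hwI : w ∉ I := by
    intro hmem
    have := three_cubics_coeff_aux K w hmem (Finsupp.single 0 2 + Finsupp.single 1 2)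
      (by
        have : w = monomial (Finsupp.single 0 2 + Finsupp.single 1 2) 1 := by
          rw [hw, X_pow_eq_monomial, X_pow_eq_monomial, monomial_mul, mul_one]
        rw [this, coeff_monomial, if_pos rfl]
        exact one_ne_zero)
    simp [Finsupp.single_apply] at this
  have g1 : (X 0 ^ 3 : R) ∈ I := Ideal.subset_span (by simp)
  have g2 : (X 1 ^ 3 : R) ∈ I := Ideal.subset_span (by simp)
  have g3 : (X 0 ^ 2 * X 2 + X 0 * X 1 * X 3 + X 1 ^ 2 * X 4 : R) ∈ I :=
    Ideal.subset_span (by simp)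
  -- every variable multiplies w into I
  have hXw : ∀ i : Fin 5, X i * w ∈ I := by
    intro i
    fin_cases i
    · show X 0 * w ∈ I
      have : X 0 * w = X 1 ^ 2 * X 0 ^ 3 := by ring
      rw [this]; exact Ideal.mul_mem_left _ _ g1
    · show X 1 * w ∈ I
      have : X 1 * w = X 0 ^ 2 * X 1 ^ 3 := by ring
      rw [this]; exact Ideal.mul_mem_left _ _ g2
    · show X 2 * w ∈ I
      have : X 2 * w = X 1 ^ 2 * (X 0 ^ 2 * X 2 + X 0 * X 1 * X 3 + X 1 ^ 2 * X 4)
          - (X 0 * X 3 + X 1 * X 4) * X 1 ^ 3 := by ring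
      rw [this]
      exact sub_mem (Ideal.mul_mem_left _ _ g3) (Ideal.mul_mem_left _ _ g2)
    · show X 3 * w ∈ I
      have : X 3 * w = X 0 * X 1 * (X 0 ^ 2 * X 2 + X 0 * X 1 * X 3 + X 1 ^ 2 * X 4)
          - (X 1 * X 2) * X 0 ^ 3 - (X 0 * X 4) * X 1 ^ 3 := by ring
      rw [this]
      exact sub_mem (sub_mem (Ideal.mul_mem_left _ _ g3) (Ideal.mul_mem_left _ _ g1))
        (Ideal.mul_mem_left _ _ g2)
    · show X 4 * w ∈ I
      have : X 4 * w = X 0 ^ 2 * (X 0 ^ 2 * X 2 + X 0 * X 1 * X 3 + X 1 ^ 2 * X 4)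
          - (X 0 * X 2 + X 1 * X 3) * X 0 ^ 3 := by ring
      rw [this]
      exact sub_mem (Ideal.mul_mem_left _ _ g3) (Ideal.mul_mem_left _ _ g1)
  -- hence every element of m multiplies w into I
  have hrw : ∀ r ∈ (Ideal.span (Set.range X) : Ideal R), r * w ∈ I := by
    intro r hr
    induction hr using Submodule.span_induction with
    | mem x hx => obtain ⟨i, rfl⟩ := hx; exact hXw i
    | zero => simp only [zero_mul]; exact I.zero_mem
    | add x y _ _ ihx ihy => rw [add_mul]; exact add_mem ihx ihy
    | smul a x _ ihx => rw [smul_eq_mul, mul_assoc]; exact Ideal.mul_mem_left _ _ ihx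
  have ht0 : (Ideal.Quotient.mk I w : R ⧸ I) ≠ 0 := by
    rw [ne_eq, Ideal.Quotient.eq_zero_iff_mem]; exact hwI
  refine ⟨⟨Ideal.Quotient.mk I w, 0, ht0⟩, ?_⟩
  intro r hr
  refine ⟨Ideal.Quotient.mk I w, ht0, ?_⟩
  have hsm : r • (Ideal.Quotient.mk I w) = Ideal.Quotient.mk I (r * w) := rfl
  rw [hsm, Ideal.Quotient.eq_zero_iff_mem]
  exact hrw r hr
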